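/- Let 𝔾 ⊂ ℂ be a bounded set with 1 ∈ 𝔾. Let (Ω, d) be a separable Abelian metric group whose metric d is invariant under translations, let X be a Banach space with a continuous dense additive embedding X ↪ Ω, and let ({φ_n}_{n=1}^∞, {c_n}_{n=1}^∞) be a biorthonormal system in (X, X*). Suppose the system {φ_n} possesses the universal approximation property in Ω. Then there exists U ∈ X which is almost universal for Ω with respect to {φ_n}: there exists a sequence {δ_n}_{n=1}^∞ ⊂ 𝔾 with limsup_{n→∞} #{m ∈ ℕ : m ≤ n and δ_m = 1}/n = 1 such that for every f ∈ Ω there is a subsequence {N_k} ⊂ ℕ with d(Σ_{n=1}^{N_k} δ_n c_n(U) φ_n, f) → 0 as k → ∞. -/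

import Mathlib

open Filter Topology

/-- If `Ω` is a separable Abelian metric group with an invariant metric,
`X` a Banach space with a continuous dense additive embedding `j : X ↪ Ω`, and `(φ, c)` a
biorthonormal system in `(X, X*)` possessing the universal approximation property in `Ω`,
then there exists an element `U ∈ X` which is almost universal for `Ω` w.r.t. `φ`. -/
theorem exists_almost_universal_element {X Ω : Type*}
    [NormedAddCommGroup X] [NormedSpace ℂ X] [CompleteSpace X]
    [MetricSpace Ω] [AddCommGroup Ω] [TopologicalSpace.SeparableSpace Ω]
    (hinv : ∀ a b h : Ω, dist (a + h) (b + h) = dist a b)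
    (𝔾 : Set ℂ) (h𝔾bdd : Bornology.IsBounded 𝔾) (h𝔾one : (1 : ℂ) ∈ 𝔾)
    (j : X →+ Ω) (hj_cont : Continuous j) (hj_inj : Function.Injective j)
    (hj_dense : DenseRange j)
    (φ : ℕ → X) (c : ℕ → X →L[ℂ] ℂ)
    (hbi : ∀ n m : ℕ, c n (φ m) = if n = m then 1 else 0)
    -- the universal approximation property of the system `φ` in `Ω`:
    (huap : ∃ D : Set X, Dense D ∧
      ∀ f ∈ D, ∀ ε > (0 : ℝ), ∀ δ > (0 : ℝ), ∀ n0 : ℕ,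
        ∃ N : ℕ, n0 ≤ N ∧ ∃ α : ℕ → ℂ, ∃ d : ℕ → ℂ, (∀ n, d n ∈ 𝔾) ∧
          ‖∑ n ∈ Finset.Icc n0 N, α n • φ n‖ < ε ∧
          dist (j f) (j (∑ n ∈ Finset.Icc n0 N, (d n * α n) • φ n)) < δ) :
    ∃ U : X, ∃ d : ℕ → ℂ, (∀ n, d n ∈ 𝔾) ∧
      Filter.limsup (fun n : ℕ =>
        (((Finset.range n).filter (fun m => d m = 1)).card : ℝ) / n) atTop = 1 ∧
      ∀ f : Ω, ∃ N : ℕ → ℕ, StrictMono N ∧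
        Tendsto (fun k => j (∑ n ∈ Finset.range (N k), (d n * c n U) • φ n))
          atTop (𝓝 f) := by
  classical
  obtain ⟨D, hD, hUAP⟩ := huap
  have : Nonempty Ω := ⟨0⟩
  set g : ℕ → Ω := TopologicalSpace.denseSeq Ω with hgdef
  have hgd : DenseRange g := TopologicalSpace.denseRange_denseSeq Ω
  -- `j '' D` is dense in `Ω`
  have hjD : Dense (j '' D) := hj_dense.dense_image hj_cont hD
  -- the fundamental extension step
  have step : ∀ (k B : ℕ) (P : X), ∃ (N' : ℕ) (h' : X) (dblk' : ℕ → ℂ),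
      (k+1)*(B+1) ≤ N' ∧ ‖h'‖ < (1/2:ℝ)^k ∧ (∀ n, dblk' n ∈ 𝔾) ∧
      (∀ m, m ∉ Finset.Icc ((k+1)*(B+1)) N' → c m h' = 0) ∧
      dist (j (P + ∑ n ∈ Finset.Icc ((k+1)*(B+1)) N', (dblk' n * c n h') • φ n))
        (g (Nat.unpair k).1) < (1/2:ℝ)^k := by
    intro k B P
    set n0' : ℕ := (k+1)*(B+1) with hn0'
    have hη : (0:ℝ) < (1/2:ℝ)^k := by positivity
    -- choose f ∈ D with j f close to the "remaining target"
    obtain ⟨y, hy1, hy2⟩ := (Metric.dense_iff.1 hjD) (g (Nat.unpair k).1 - j P)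
      ((1/2:ℝ)^k / 2) (by positivity)
    obtain ⟨f, hfD, rfl⟩ := hy2
    obtain ⟨N, hN, α, dd, hdd, hHnorm, hdist⟩ :=
      hUAP f hfD ((1/2:ℝ)^k) hη ((1/2:ℝ)^k / 2) (by positivity) n0'
    set H : X := ∑ n ∈ Finset.Icc n0' N, α n • φ n with hH
    have hcH : ∀ n ∈ Finset.Icc n0' N, c n H = α n := by
      intro n hn
      rw [hH, map_sum]
      have : ∀ m ∈ Finset.Icc n0' N, c n (α m • φ m) = if m = n then α m else 0 := by
        intro m hm
        rw [map_smul, hbi]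
        by_cases h : n = m <;> simp [h, eq_comm]
      rw [Finset.sum_congr rfl this, Finset.sum_ite_eq' _ n α]
      simp [hn]
    have hcH0 : ∀ m, m ∉ Finset.Icc n0' N → c m H = 0 := by
      intro m hm
      rw [hH, map_sum]
      apply Finset.sum_eq_zero
      intro n hn
      rw [map_smul, hbi]
      have : m ≠ n := fun h => hm (h ▸ hn)
      simp [this]
    refine ⟨N, H, dd, hN, hHnorm, hdd, hcH0, ?_⟩
    have hq : ∑ n ∈ Finset.Icc n0' N, (dd n * c n H) • φ n
        = ∑ n ∈ Finset.Icc n0' N, (dd n * α n) • φ n := by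
      apply Finset.sum_congr rfl
      intro n hn; rw [hcH n hn]
    rw [hq]
    set Q : X := ∑ n ∈ Finset.Icc n0' N, (dd n * α n) • φ n with hQ
    have hjadd : j (P + Q) = j Q + j P := by rw [map_add, add_comm]
    calc dist (j (P + Q)) (g (Nat.unpair k).1)
        ≤ dist (j (P + Q)) (j f + j P) + dist (j f + j P) (g (Nat.unpair k).1) :=
          dist_triangle _ _ _
      _ = dist (j Q) (j f) + dist (j f) (g (Nat.unpair k).1 - j P) := by
          have e1 : dist (j (P + Q)) (j f + j P) = dist (j Q) (j f) := by
            rw [hjadd, hinv]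
          have e2 : dist (j f + j P) (g (Nat.unpair k).1)
              = dist (j f) (g (Nat.unpair k).1 - j P) := by
            have h3 : g (Nat.unpair k).1 - j P + j P = g (Nat.unpair k).1 := by abel
            have := hinv (j f) (g (Nat.unpair k).1 - j P) (j P)
            rw [h3] at this
            exact this
          rw [e1, e2]
      _ < (1/2:ℝ)^k / 2 + (1/2:ℝ)^k / 2 := by
          apply add_lt_add
          · rw [dist_comm]; exact hdist
          · rw [dist_comm]; simpa [Metric.mem_ball, dist_comm] using hy1
      _ = (1/2:ℝ)^k := by ring
  choose Nf Hf Df hstep1 hstep2 hstep3 hstep4 hstep5 using step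
  -- the recursive construction
  let st : ℕ → ℕ × X := fun k => Nat.rec ((0:ℕ), (0:X)) (fun k ih =>
    (Nf k ih.1 ih.2 + 1,
     ih.2 + ∑ n ∈ Finset.Icc ((k+1)*(ih.1+1)) (Nf k ih.1 ih.2),
       (Df k ih.1 ih.2 n * c n (Hf k ih.1 ih.2)) • φ n)) k
  set n0 : ℕ → ℕ := fun k => (k+1)*((st k).1+1) with hn0def
  set NN : ℕ → ℕ := fun k => Nf k (st k).1 (st k).2 with hNNdef
  set hh : ℕ → X := fun k => Hf k (st k).1 (st k).2 with hhhdef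
  set dd : ℕ → ℕ → ℂ := fun k => Df k (st k).1 (st k).2 with hdddef
  set P : ℕ → X := fun k => (st (k+1)).2 with hPdef
  set BB : ℕ → ℕ := fun k => (st (k+1)).1 with hBBdef
  have hBB : ∀ k, BB k = NN k + 1 := fun k => rfl
  have hPrec : ∀ k, P k = (st k).2 + ∑ n ∈ Finset.Icc (n0 k) (NN k),
      (dd k n * c n (hh k)) • φ n := fun k => rfl
  have hn0N : ∀ k, n0 k ≤ NN k := fun k => hstep1 k (st k).1 (st k).2
  have hnorm : ∀ k, ‖hh k‖ < (1/2:ℝ)^k := fun k => hstep2 k (st k).1 (st k).2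
  have hmem : ∀ k n, dd k n ∈ 𝔾 := fun k => hstep3 k (st k).1 (st k).2
  have hcz : ∀ k m, m ∉ Finset.Icc (n0 k) (NN k) → c m (hh k) = 0 :=
    fun k => hstep4 k (st k).1 (st k).2
  have hdistP : ∀ k, dist (j (P k)) (g (Nat.unpair k).1) < (1/2:ℝ)^k := by
    intro k
    have := hstep5 k (st k).1 (st k).2
    rw [hPrec k]
    exact this
  -- ordering facts
  have hstlt : ∀ k, (st k).1 < n0 k := by
    intro k
    calc (st k).1 < (st k).1 + 1 := Nat.lt_succ_self _
      _ ≤ (k+1)*((st k).1+1) := Nat.le_mul_of_pos_left _ (Nat.succ_pos k)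
  have hstsucc : ∀ k, (st (k+1)).1 = NN k + 1 := fun k => rfl
  have hstmono : ∀ k, (st k).1 < (st (k+1)).1 := by
    intro k
    rw [hstsucc]
    exact lt_of_lt_of_le (lt_of_lt_of_le (hstlt k) (hn0N k)) (Nat.le_succ _)
  have hstmono' : Monotone (fun k => (st k).1) :=
    monotone_nat_of_le_succ (fun k => (hstmono k).le)
  have hNltn0 : ∀ k, NN k < n0 (k+1) := by
    intro k
    have : NN k < (st (k+1)).1 + 1 := by rw [hstsucc]; omega
    exact lt_of_lt_of_le this (by
      calc (st (k+1)).1 + 1 ≤ (k+2)*((st (k+1)).1+1) :=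
        Nat.le_mul_of_pos_left _ (by omega)
      _ = n0 (k+1) := rfl)
  have hn0mono : Monotone n0 := by
    apply monotone_nat_of_le_succ
    intro k
    exact le_of_lt (lt_of_le_of_lt (hn0N k) (hNltn0 k))
  have hNlt : ∀ j k, j < k → NN j < n0 k := by
    intro a b hab
    calc NN a < n0 (a+1) := hNltn0 a
      _ ≤ n0 b := hn0mono hab
  -- define U
  have hsum : Summable hh := by
    apply Summable.of_norm_bounded
      (summable_geometric_of_lt_one (r := (1/2:ℝ)) (by norm_num) (by norm_num))
    exact fun k => (hnorm k).le
  set U : X := ∑' k, hh k with hU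
  have hcU : ∀ n, c n U = ∑' k, c n (hh k) := fun n => (c n).map_tsum hsum
  -- block disjointness
  have huniq : ∀ a b n, n ∈ Finset.Icc (n0 a) (NN a) → n ∈ Finset.Icc (n0 b) (NN b) →
      a = b := by
    intro a b n ha hb
    simp only [Finset.mem_Icc] at ha hb
    by_contra hne
    rcases Nat.lt_or_ge a b with h | h
    · exact absurd (hNlt a b h) (by omega)
    · have : b < a := by omega
      exact absurd (hNlt b a this) (by omega)
  -- the sign sequence
  set d : ℕ → ℂ := fun n =>
    if hn : ∃ k, n ∈ Finset.Icc (n0 k) (NN k) then dd hn.choose n else 1 with hddef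
  have hdOn : ∀ k n, n ∈ Finset.Icc (n0 k) (NN k) → d n = dd k n := by
    intro k n hn
    have hex : ∃ k, n ∈ Finset.Icc (n0 k) (NN k) := ⟨k, hn⟩
    show (if hn : ∃ k, n ∈ Finset.Icc (n0 k) (NN k) then dd hn.choose n else 1) = dd k n
    rw [dif_pos hex]
    congr 1
    exact huniq hex.choose k n hex.choose_spec hn
  have hdOff : ∀ n, (¬∃ k, n ∈ Finset.Icc (n0 k) (NN k)) → d n = 1 := by
    intro n hn
    show (if hn : ∃ k, n ∈ Finset.Icc (n0 k) (NN k) then dd hn.choose n else 1) = 1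
    rw [dif_neg hn]
  have hdG : ∀ n, d n ∈ 𝔾 := by
    intro n
    by_cases hn : ∃ k, n ∈ Finset.Icc (n0 k) (NN k)
    · rw [hdOn hn.choose n hn.choose_spec]; exact hmem _ n
    · rw [hdOff n hn]; exact h𝔾one
  -- coefficients of U
  have hcUOn : ∀ k n, n ∈ Finset.Icc (n0 k) (NN k) → c n U = c n (hh k) := by
    intro k n hn
    rw [hcU]
    apply tsum_eq_single
    intro b hb
    apply hcz b n
    intro hnb
    exact hb (huniq b k n hnb hn)
  have hcUOff : ∀ n, (¬∃ k, n ∈ Finset.Icc (n0 k) (NN k)) → c n U = 0 := by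
    intro n hn
    rw [hcU]
    have : ∀ k, c n (hh k) = 0 := fun k => hcz k n (fun h => hn ⟨k, h⟩)
    simp [this]
  -- the partial-sum identity
  have hPsum : ∀ k, ∑ n ∈ Finset.range (BB k), (d n * c n U) • φ n = P k := by
    have hblock : ∀ k, ∑ n ∈ Finset.Icc (n0 k) (NN k), (d n * c n U) • φ n
        = ∑ n ∈ Finset.Icc (n0 k) (NN k), (dd k n * c n (hh k)) • φ n := by
      intro k
      apply Finset.sum_congr rfl
      intro n hn
      rw [hcUOn k n hn, hdOn k n hn]
    intro k
    induction k with
    | zero =>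
      rw [hPrec 0]
      have hst0 : (st 0).2 = 0 := rfl
      rw [hst0, zero_add, ← hblock 0]
      symm
      apply Finset.sum_subset
      · intro n hn
        simp only [Finset.mem_Icc] at hn
        simp only [Finset.mem_range]
        have : NN 0 < BB 0 := by rw [hBB]; omega
        omega
      · intro n hn hn2
        simp only [Finset.mem_range] at hn
        simp only [Finset.mem_Icc, not_and, not_le] at hn2
        have hnb : ¬∃ m, n ∈ Finset.Icc (n0 m) (NN m) := by
          rintro ⟨m, hm⟩
          simp only [Finset.mem_Icc] at hm
          have h1 : n0 0 ≤ n0 m := hn0mono (Nat.zero_le m)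
          have h2 : n < BB 0 := hn
          have h3 : BB 0 = NN 0 + 1 := hBB 0
          omega
        rw [hcUOff n hnb]
        simp
    | succ k ih =>
      have hle : BB k ≤ BB (k+1) := by
        rw [hBB, hBB]
        have h1 := hNltn0 k
        have h2 := hn0N (k+1)
        omega
      have hsplit : ∑ n ∈ Finset.range (BB (k+1)), (d n * c n U) • φ n
          = ∑ n ∈ Finset.range (BB k), (d n * c n U) • φ n
            + ∑ n ∈ Finset.Ico (BB k) (BB (k+1)), (d n * c n U) • φ n := by
        rw [Finset.range_eq_Ico, Finset.range_eq_Ico]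
        exact (Finset.sum_Ico_consecutive _ (Nat.zero_le _) hle).symm
      rw [hsplit, ih, hPrec (k+1)]
      have hstk : (st (k+1)).2 = P k := rfl
      rw [hstk]
      congr 1
      have hsub : Finset.Icc (n0 (k+1)) (NN (k+1)) ⊆ Finset.Ico (BB k) (BB (k+1)) := by
        intro n hn
        simp only [Finset.mem_Icc, Finset.mem_Ico] at hn ⊢
        have h1 : BB k ≤ n0 (k+1) := by
          rw [hBB]
          have := hNltn0 k
          omega
        have h2 : NN (k+1) < BB (k+1) := by rw [hBB]; omega
        omega
      have hIco : ∑ n ∈ Finset.Ico (BB k) (BB (k+1)), (d n * c n U) • φ n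
          = ∑ n ∈ Finset.Icc (n0 (k+1)) (NN (k+1)), (d n * c n U) • φ n := by
        symm
        apply Finset.sum_subset hsub
        intro n hn hn2
        simp only [Finset.mem_Ico] at hn
        have hnb : ¬∃ m, n ∈ Finset.Icc (n0 m) (NN m) := by
          rintro ⟨m, hm⟩
          simp only [Finset.mem_Icc] at hm
          rcases Nat.lt_or_ge m (k+1) with h | h
          · have hlt : NN m < BB k := by
              rw [hBB]
              have hle2 : NN m ≤ NN k := by
                rcases Nat.lt_or_ge m k with h2 | h2
                · exact le_of_lt (lt_of_lt_of_le (hNlt m k h2) (hn0N k))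
                · have : m = k := by omega
                  rw [this]
              omega
            omega
          · rcases Nat.eq_or_lt_of_le h with h2 | h2
            · subst h2
              exact hn2 (Finset.mem_Icc.2 hm)
            · have : BB (k+1) ≤ n0 m := by
                rw [hBB]
                have := hNlt (k+1) m h2
                omega
              omega
        rw [hcUOff n hnb]
        simp
      rw [hIco, hblock (k+1)]
  refine ⟨U, d, hdG, ?_, ?_⟩
  · -- the limsup condition
    have hub : ∀ᶠ n in atTop,
        (((Finset.range n).filter (fun m => d m = 1)).card : ℝ) / n ≤ 1 := by
      filter_upwards [eventually_ge_atTop 1] with n hn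
      have hn' : (0:ℝ) < n := by exact_mod_cast hn
      rw [div_le_one hn']
      have := Finset.card_filter_le (Finset.range n) (fun m => d m = 1)
      rw [Finset.card_range] at this
      exact_mod_cast this
    have hlb : ∀ ε > (0:ℝ), ∃ᶠ n in atTop,
        1 - ε ≤ (((Finset.range n).filter (fun m => d m = 1)).card : ℝ) / n := by
      intro ε hε
      rw [frequently_atTop]
      intro K
      obtain ⟨k0, hk0⟩ := exists_nat_gt (1/ε)
      set k := max K k0 with hkdef
      have hKk : K ≤ k := le_max_left _ _
      have hk0k : k0 ≤ k := le_max_right _ _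
      have hkn0 : k + 1 ≤ n0 k := Nat.le_mul_of_pos_right _ (Nat.succ_pos _)
      refine ⟨n0 k, by omega, ?_⟩
      -- all indices in [B', n0 k) carry the value 1
      have hsubset : Finset.Ico ((st k).1) (n0 k)
          ⊆ (Finset.range (n0 k)).filter (fun m => d m = 1) := by
        intro m hm
        simp only [Finset.mem_Ico] at hm
        rw [Finset.mem_filter, Finset.mem_range]
        refine ⟨hm.2, ?_⟩
        apply hdOff
        rintro ⟨i, hi⟩
        simp only [Finset.mem_Icc] at hi
        rcases Nat.lt_or_ge i k with h | h
        · have h1' : (st (i+1)).1 ≤ (st k).1 := hstmono' (show i + 1 ≤ k by omega)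
          rw [hstsucc i] at h1'
          omega
        · have h2 : n0 k ≤ n0 i := hn0mono h
          omega
      have hBle : (st k).1 ≤ n0 k := (hstlt k).le
      have hcard : (n0 k : ℝ) - ((st k).1 : ℝ)
          ≤ (((Finset.range (n0 k)).filter (fun m => d m = 1)).card : ℝ) := by
        have h1 := Finset.card_le_card hsubset
        rw [Nat.card_Ico] at h1
        have h2 : ((n0 k - (st k).1 : ℕ) : ℝ) = (n0 k : ℝ) - ((st k).1 : ℝ) := by
          exact Nat.cast_sub hBle
        rw [← h2]
        exact_mod_cast h1
      have hnpos : (0:ℝ) < (n0 k : ℝ) := by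
        have : 0 < n0 k := by omega
        exact_mod_cast this
      have hεk : 1 < ε * ((k:ℝ) + 1) := by
        have h1 : (1:ℝ)/ε < (k:ℝ) + 1 := by
          have : (k0 : ℝ) ≤ (k : ℝ) := by exact_mod_cast hk0k
          linarith
        calc (1:ℝ) = (1/ε) * ε := by field_simp
          _ < ((k:ℝ)+1) * ε := by
              apply mul_lt_mul_of_pos_right h1 hε
          _ = ε * ((k:ℝ)+1) := by ring
      have hn0eq : ((n0 k : ℕ) : ℝ) = ((k:ℝ)+1) * (((st k).1 : ℝ) + 1) := by
        show (((k+1) * ((st k).1 + 1) : ℕ) : ℝ) = _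
        push_cast
        ring
      calc (1:ℝ) - ε ≤ ((n0 k : ℝ) - ((st k).1 : ℝ)) / (n0 k : ℝ) := by
            rw [le_div_iff₀ hnpos]
            have hb : (0:ℝ) ≤ ((st k).1 : ℝ) := Nat.cast_nonneg _
            nlinarith [mul_nonneg (by linarith : (0:ℝ) ≤ ε * ((k:ℝ)+1) - 1)
              (by linarith : (0:ℝ) ≤ ((st k).1 : ℝ) + 1)]
        _ ≤ (((Finset.range (n0 k)).filter (fun m => d m = 1)).card : ℝ) / (n0 k) := by
            gcongr
    have h0 : ∀ n : ℕ, (0:ℝ) ≤ (((Finset.range n).filter (fun m => d m = 1)).card : ℝ) / n :=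
      fun n => div_nonneg (Nat.cast_nonneg _) (Nat.cast_nonneg _)
    have hcob : Filter.IsCoboundedUnder (· ≤ ·) atTop
        (fun n : ℕ => (((Finset.range n).filter (fun m => d m = 1)).card : ℝ) / n) :=
      Filter.isCoboundedUnder_le_of_eventually_le atTop
        (Filter.Eventually.of_forall h0)
    apply le_antisymm
    · exact Filter.limsup_le_of_le hcob hub
    · apply le_of_forall_sub_le
      intro ε hε
      exact Filter.le_limsup_of_frequently_le (hlb ε hε)
        (Filter.isBoundedUnder_of_eventually_le hub)
  · -- universality
    intro f
    have hfreq : ∀ (K : ℕ) (ε : ℝ), 0 < ε → ∃ k, K ≤ k ∧ dist (j (P k)) f < ε := by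
      intro K ε hε
      obtain ⟨m, hm⟩ := hgd.exists_dist_lt f (half_pos hε)
      obtain ⟨r0, hr0⟩ := exists_pow_lt_of_lt_one (half_pos hε) (by norm_num : (1/2:ℝ) < 1)
      refine ⟨Nat.pair m (max K r0), le_trans (le_max_left _ _) (Nat.right_le_pair _ _), ?_⟩
      set k := Nat.pair m (max K r0) with hkdef
      have hk2 : (1/2:ℝ)^k ≤ (1/2:ℝ)^r0 :=
        pow_le_pow_of_le_one (by norm_num) (by norm_num)
          (le_trans (le_max_right _ _) (Nat.right_le_pair _ _))
      have h1 : dist (j (P k)) (g m) < (1/2:ℝ)^k := by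
        have h2 := hdistP k
        rw [hkdef] at h2 ⊢
        rwa [Nat.unpair_pair] at h2
      calc dist (j (P k)) f ≤ dist (j (P k)) (g m) + dist (g m) f := dist_triangle _ _ _
        _ < (1/2:ℝ)^r0 + ε/2 := by
            apply add_lt_add_of_lt_of_le (lt_of_lt_of_le h1 hk2)
            rw [dist_comm]
            exact hm.le
        _ < ε/2 + ε/2 := by linarith
        _ = ε := by ring
    have hsel : ∀ (i K : ℕ), ∃ k, K ≤ k ∧ dist (j (P k)) f < 1/((i:ℝ)+1) :=
      fun i K => hfreq K (1/((i:ℝ)+1)) (by positivity)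
    choose sel hsel1 hsel2 using hsel
    let ks : ℕ → ℕ := fun i => Nat.rec (sel 0 0) (fun i ih => sel (i+1) (ih+1)) i
    have hks : ∀ i, ks (i+1) = sel (i+1) (ks i + 1) := fun _ => rfl
    have hksmono : StrictMono ks := by
      apply strictMono_nat_of_lt_succ
      intro i
      have := hsel1 (i+1) (ks i + 1)
      rw [hks i]
      omega
    have hksd : ∀ i, dist (j (P (ks i))) f < 1/((i:ℝ)+1) := by
      intro i
      match i with
      | 0 => exact hsel2 0 0
      | (i+1) => exact hsel2 (i+1) (ks i + 1)
    have hBBmono : StrictMono BB := strictMono_nat_of_lt_succ (fun k => hstmono (k+1))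
    refine ⟨fun i => BB (ks i), hBBmono.comp hksmono, ?_⟩
    have heq : (fun i => j (∑ n ∈ Finset.range (BB (ks i)), (d n * c n U) • φ n))
        = fun i => j (P (ks i)) := funext fun i => congrArg j (hPsum (ks i))
    rw [heq, tendsto_iff_dist_tendsto_zero]
    apply squeeze_zero (fun i => dist_nonneg) (fun i => (hksd i).le)
    exact tendsto_one_div_add_atTop_nhds_zero_nat
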